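/- Let Ĥ solve Ĥ' = 3(H* − Ĥ)/(GĤ³) on (0, ∞) with Ĥ(0) = 2H*, where G > 0, H* > 0. Then Ĥ is strictly decreasing, satisfies H* < Ĥ(ξ) < 2H* for all ξ > 0, exists globally on [0, ∞), and Ĥ(ξ) → H* as ξ → ∞. -/

import Mathlib

open Set
open Filter

noncomputable def psiAux (Hstar h : ℝ) : ℝ :=
  h^3/3 + Hstar*h^2/2 + Hstar^2*h + Hstar^3 * Real.log (h - Hstar)

lemma psiAux_hasDerivAt (Hstar h : ℝ) (hh : Hstar < h) :
    HasDerivAt (psiAux Hstar) (h^3 / (h - Hstar)) h := by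
  have hne : h - Hstar ≠ 0 := sub_ne_zero.2 (ne_of_gt hh)
  have hlog : HasDerivAt (fun x : ℝ => Real.log (x - Hstar)) ((h - Hstar)⁻¹) h := by
    have := (Real.hasDerivAt_log hne).comp h ((hasDerivAt_id h).sub_const Hstar)
    rw [mul_one] at this
    exact this
  have h1 : HasDerivAt (fun x : ℝ => x^3/3) (h^2) h := by
    have := (hasDerivAt_pow 3 h).div_const 3
    simpa using this
  have h2 : HasDerivAt (fun x : ℝ => Hstar * x^2/2) (Hstar * h) h := by
    have := (((hasDerivAt_pow 2 h).const_mul Hstar).div_const 2)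
    refine this.congr_deriv ?_
    ring
  have h3 : HasDerivAt (fun x : ℝ => Hstar^2 * x) (Hstar^2) h := by
    simpa using (hasDerivAt_id h).const_mul (Hstar^2)
  have h4 : HasDerivAt (fun x : ℝ => Hstar^3 * Real.log (x - Hstar))
      (Hstar^3 * (h - Hstar)⁻¹) h := hlog.const_mul _
  have := ((h1.add h2).add h3).add h4
  refine this.congr_deriv ?_
  field_simp
  ring

lemma psiAux_strictMonoOn (Hstar : ℝ) (h0 : 0 < Hstar) :
    StrictMonoOn (psiAux Hstar) (Ioi Hstar) := by
  have hcont : ContinuousOn (psiAux Hstar) (Ioi Hstar) := fun x hx =>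
    ((psiAux_hasDerivAt Hstar x hx).continuousAt).continuousWithinAt
  apply strictMonoOn_of_hasDerivWithinAt_pos (convex_Ioi Hstar) hcont
    (fun x hx => ((psiAux_hasDerivAt Hstar x (interior_subset hx)).hasDerivWithinAt))
  intro x hx
  rw [interior_Ioi] at hx
  have hxpos : 0 < x := h0.trans hx
  have : 0 < x - Hstar := sub_pos.2 hx
  positivity

lemma psiAux_tendsto_atTop (Hstar : ℝ) (h0 : 0 < Hstar) :
    Tendsto (psiAux Hstar) atTop atTop := by
  unfold psiAux
  have t1 : Tendsto (fun h : ℝ => h^3/3) atTop atTop :=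
    (tendsto_pow_atTop (by norm_num)).atTop_div_const (by norm_num)
  have t2 : Tendsto (fun h : ℝ => Hstar*h^2/2) atTop atTop :=
    (((tendsto_pow_atTop (n := 2) (by norm_num)).const_mul_atTop h0).atTop_div_const (by norm_num))
  have t3 : Tendsto (fun h : ℝ => Hstar^2*h) atTop atTop :=
    tendsto_id.const_mul_atTop (by positivity)
  have t4 : Tendsto (fun h : ℝ => Hstar^3 * Real.log (h - Hstar)) atTop atTop :=
    (Real.tendsto_log_atTop.comp (tendsto_atTop_add_const_right _ (-Hstar)
      tendsto_id)).const_mul_atTop (by positivity)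
  exact Tendsto.atTop_add_atTop (Tendsto.atTop_add_atTop (Tendsto.atTop_add_atTop t1 t2) t3) t4

lemma psiAux_tendsto_atBot (Hstar : ℝ) (h0 : 0 < Hstar) :
    Tendsto (psiAux Hstar) (nhdsWithin Hstar (Ioi Hstar)) atBot := by
  unfold psiAux
  have t1 : Tendsto (fun h : ℝ => h^3/3 + Hstar*h^2/2 + Hstar^2*h)
      (nhdsWithin Hstar (Ioi Hstar)) (nhds (Hstar^3/3 + Hstar*Hstar^2/2 + Hstar^2*Hstar)) := by
    apply Tendsto.mono_left _ nhdsWithin_le_nhds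
    exact Continuous.tendsto (by continuity) Hstar
  have t2 : Tendsto (fun h : ℝ => Hstar^3 * Real.log (h - Hstar))
      (nhdsWithin Hstar (Ioi Hstar)) atBot := by
    have hsub : Tendsto (fun h : ℝ => h - Hstar) (nhdsWithin Hstar (Ioi Hstar))
        (nhdsWithin 0 (Ioi 0)) := by
      apply tendsto_nhdsWithin_of_tendsto_nhds_of_eventually_within
      · have : Tendsto (fun h : ℝ => h - Hstar) (nhds Hstar) (nhds 0) := by
          simpa using (continuous_sub_right Hstar).tendsto Hstar
        exact this.mono_left nhdsWithin_le_nhds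
      · filter_upwards [self_mem_nhdsWithin] with x hx
        exact sub_pos.2 (mem_Ioi.mp hx)
    exact (Real.tendsto_log_nhdsGT_zero.comp hsub).const_mul_atBot (by positivity)
  simpa using t1.add_atBot t2

lemma psiAux_surj (Hstar : ℝ) (h0 : 0 < Hstar) (y : ℝ) :
    ∃ h ∈ Ioi Hstar, psiAux Hstar h = y := by
  -- find a with psi a < y
  have hbot := psiAux_tendsto_atBot Hstar h0
  have hev : ∀ᶠ h in nhdsWithin Hstar (Ioi Hstar), psiAux Hstar h < y :=
    hbot.eventually (eventually_lt_atBot y)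
  have hne : (nhdsWithin Hstar (Ioi Hstar)).NeBot := nhdsGT_neBot Hstar
  obtain ⟨a, hay, haI⟩ := (hev.and self_mem_nhdsWithin).exists
  -- find b ≥ a with psi b > y
  have htop := psiAux_tendsto_atTop Hstar h0
  obtain ⟨b, hb1, hb2⟩ := ((htop.eventually (eventually_gt_atTop y)).and
    (eventually_ge_atTop a)).exists
  have hab : a ≤ b := hb2
  have hcont : ContinuousOn (psiAux Hstar) (Icc a b) := by
    intro x hx
    exact ((psiAux_hasDerivAt Hstar x (lt_of_lt_of_le haI hx.1)).continuousAt).continuousWithinAt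
  have : y ∈ Icc (psiAux Hstar a) (psiAux Hstar b) := ⟨le_of_lt hay, le_of_lt hb1⟩
  obtain ⟨c, hc, hcy⟩ := intermediate_value_Icc hab hcont this
  exact ⟨c, lt_of_lt_of_le haI hc.1, hcy⟩

/-- There is a global solution Ĥ of Ĥ' = 3(H* − Ĥ)/(GĤ³) on [0, ∞) with
Ĥ(0) = 2H*, which is strictly decreasing, satisfies H* < Ĥ < 2H* for ξ > 0,
and converges to H* at infinity. -/
theorem stmt_12 (G Hstar : ℝ) (hG : 0 < G) (hHstar : 0 < Hstar) :
    ∃ Hhat : ℝ → ℝ,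
      Hhat 0 = 2 * Hstar ∧
      (∀ ξ ∈ Ici (0:ℝ),
        HasDerivAt Hhat (3 * (Hstar - Hhat ξ) / (G * (Hhat ξ)^3)) ξ) ∧
      StrictAntiOn Hhat (Ici (0:ℝ)) ∧
      (∀ ξ > (0:ℝ), Hstar < Hhat ξ ∧ Hhat ξ < 2 * Hstar) ∧
      Filter.Tendsto Hhat Filter.atTop (nhds Hstar) := by
  have hmono' := psiAux_strictMonoOn Hstar hHstar
  set S := Ioi Hstar with hS
  let f : S → ℝ := fun x => psiAux Hstar x
  have hmono : StrictMono f := fun x y hxy =>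
    hmono' x.2 y.2 (Subtype.coe_lt_coe.2 hxy)
  have hsurj : Function.Surjective f := by
    intro y
    obtain ⟨h, hh, he⟩ := psiAux_surj Hstar hHstar y
    exact ⟨⟨h, hh⟩, he⟩
  let e : S ≃o ℝ := StrictMono.orderIsoOfSurjective f hmono hsurj
  let Hinv : ℝ → ℝ := fun y => (e.symm y : ℝ)
  have hinv_mem : ∀ y, Hstar < Hinv y := fun y => (e.symm y).2
  have hpsi_inv : ∀ y, psiAux Hstar (Hinv y) = y := fun y =>
    StrictMono.orderIsoOfSurjective_self_symm_apply f hmono hsurj y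
  have hinv_psi : ∀ h (hh : Hstar < h), Hinv (psiAux Hstar h) = h := fun h hh => by
    have := StrictMono.orderIsoOfSurjective_symm_apply_self f hmono hsurj ⟨h, hh⟩
    exact congrArg Subtype.val this
  have hinv_cont : Continuous Hinv := by
    have h1 : Continuous (fun y => (e.toHomeomorph.symm y : ℝ)) :=
      continuous_subtype_val.comp e.toHomeomorph.symm.continuous
    have h2 : (fun y => (e.toHomeomorph.symm y : ℝ)) = Hinv := by
      funext y
      simp [Hinv]
    rwa [h2] at h1
  have hinv_deriv : ∀ y, HasDerivAt Hinv (((Hinv y)^3 / (Hinv y - Hstar))⁻¹) y := by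
    intro y
    have hf := psiAux_hasDerivAt Hstar (Hinv y) (hinv_mem y)
    have h1 : 0 < Hinv y := hHstar.trans (hinv_mem y)
    have h2 : 0 < Hinv y - Hstar := sub_pos.2 (hinv_mem y)
    have hne : (Hinv y)^3 / (Hinv y - Hstar) ≠ 0 := by positivity
    exact HasDerivAt.of_local_left_inverse hinv_cont.continuousAt hf hne
      (Filter.Eventually.of_forall hpsi_inv)
  have hinv_mono : StrictMono Hinv := fun a b hab =>
    Subtype.coe_lt_coe.2 (e.symm.strictMono hab)
  have hkpos : 0 < 3 / G := by positivity
  set c := psiAux Hstar (2 * Hstar) with hc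
  refine ⟨fun ξ => Hinv (c - 3 / G * ξ), ?_, ?_, ?_, ?_, ?_⟩
  · simpa using hinv_psi (2 * Hstar) (by linarith)
  · intro ξ _
    have hlin : HasDerivAt (fun ξ : ℝ => c - 3 / G * ξ) (-(3 / G)) ξ := by
      simpa using ((hasDerivAt_id ξ).const_mul (3 / G)).const_sub c
    have hcomp := (hinv_deriv (c - 3 / G * ξ)).comp ξ hlin
    refine hcomp.congr_deriv ?_
    beta_reduce
    set h := Hinv (c - 3 / G * ξ) with hh
    have h1 : 0 < h := hHstar.trans (hinv_mem _)
    have h2 : 0 < h - Hstar := sub_pos.2 (hinv_mem _)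
    clear_value h
    rw [inv_div]
    field_simp
    ring
  · intro a _ b _ hab
    exact hinv_mono (by nlinarith)
  · intro ξ hξ
    constructor
    · exact hinv_mem _
    · have : Hinv (c - 3 / G * ξ) < Hinv c := hinv_mono (by nlinarith)
      rwa [hc, hinv_psi (2 * Hstar) (by linarith)] at this
  · rw [tendsto_order]
    constructor
    · intro a ha
      exact Filter.Eventually.of_forall fun ξ => ha.trans (hinv_mem _)
    · intro b hb
      set h0 := (Hstar + b) / 2 with hh0
      have hh1 : Hstar < h0 := by simp [hh0]; linarith
      have hh2 : h0 < b := by simp [hh0]; linarith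
      have hbot : Filter.Tendsto (fun ξ : ℝ => c - 3 / G * ξ) Filter.atTop Filter.atBot := by
        have hk : Filter.Tendsto (fun ξ : ℝ => 3 / G * ξ) Filter.atTop Filter.atTop :=
          Filter.tendsto_id.const_mul_atTop hkpos
        have hk_neg : Filter.Tendsto (fun ξ : ℝ => -(3 / G * ξ)) Filter.atTop Filter.atBot :=
          Filter.tendsto_neg_atTop_atBot.comp hk
        simpa [sub_eq_add_neg] using tendsto_atBot_add_const_left Filter.atTop c hk_neg
      filter_upwards [hbot.eventually (Filter.eventually_lt_atBot (psiAux Hstar h0))] with ξ hξ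
      calc Hinv (c - 3 / G * ξ) < Hinv (psiAux Hstar h0) := hinv_mono hξ
        _ = h0 := hinv_psi h0 hh1
        _ < b := hh2
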